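/- Let R be a commutative unital ring and I an ideal of R such that every R-module is I-coreduced. Then for every R-module M, the I-adic completion Λ_I(M) = lim_k M/I^k M is isomorphic to R/I ⊗_R M (equivalently, to M/IM), naturally in M; consequently Λ_I is right exact and its i-th left derived functor, the local homology H_i^I(−), is Tor_i^R(R/I, −). -/

import Mathlib

/-!
STATEMENT 12: Let `R` be a commutative unital ring and `I` an ideal of `R` such that every
`R`-module is `I`-coreduced. Then for every `R`-module `M`, the `I`-adic completion
`Λ_I(M) = lim_k M/I^k M` is isomorphic to `R/I ⊗_R M`, naturally in `M`; consequently `Λ_I`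
is right exact, and its `i`-th left derived functor, the local homology `H_i^I(−)`, is
`Tor_i^R(R/I, −)`.

We use Mathlib's `AdicCompletion` for `Λ_I`. Naturality is expressed by the compatibility of
the isomorphisms with `AdicCompletion.map` and `LinearMap.lTensor`; right exactness by
preservation of short exact-at-the-right sequences; and the derived-functor statement by an
isomorphism between the `i`-th left derived functor of the adic completion functor on
`ModuleCat R` and `(Tor (ModuleCat R) i).obj (R ⧸ I)`.
-/

universe u

open CategoryTheory TensorProduct

section Aux
variable {R : Type u} [CommRing R] {I : Ideal R}

theorem auxPowEq (hI : I ^ 2 = I) : ∀ n : ℕ, n ≠ 0 → I ^ n = I := by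
  intro n hn
  induction n with
  | zero => exact absurd rfl hn
  | succ n ih =>
    rcases Nat.eq_zero_or_pos n with h | h
    · subst h; rw [pow_one]
    · rw [pow_succ, ih h.ne', ← pow_two, hI]

variable (M : Type u) [AddCommGroup M] [Module R M]

theorem auxSmulEq (hI : I ^ 2 = I) {n : ℕ} (hn : n ≠ 0) :
    (I ^ n • ⊤ : Submodule R M) = I • ⊤ := by
  rw [auxPowEq hI n hn]

variable {M}

theorem auxOfEqZero (hI : I ^ 2 = I) {m : M} (hm : m ∈ (I • ⊤ : Submodule R M)) :
    AdicCompletion.of I M m = 0 := by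
  refine Subtype.ext (funext fun n => ?_)
  show Submodule.Quotient.mk m = 0
  rw [Submodule.Quotient.mk_eq_zero]
  rcases Nat.eq_zero_or_pos n with h0 | h1
  · subst h0; simp
  · rw [auxSmulEq M hI h1.ne']; exact hm

variable (M)

theorem auxOfSurjective (hI : I ^ 2 = I) :
    Function.Surjective (AdicCompletion.of I M) := by
  intro x
  obtain ⟨m, hm⟩ := Submodule.Quotient.mk_surjective _ (x.val 1)
  refine ⟨m, Subtype.ext (funext fun n => ?_)⟩
  show Submodule.Quotient.mk m = x.val n
  rcases Nat.eq_zero_or_pos n with h0 | h1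
  · subst h0
    obtain ⟨y, hy⟩ := Submodule.Quotient.mk_surjective _ (x.val 0)
    rw [← hy]
    exact (Submodule.Quotient.eq _).mpr (by simp)
  · obtain ⟨y, hy⟩ := Submodule.Quotient.mk_surjective _ (x.val n)
    have ht := x.property h1
    rw [← hy] at ht
    replace ht : Submodule.Quotient.mk y = Submodule.Quotient.mk m := ht.trans hm.symm
    have hmem : y - m ∈ (I ^ 1 • ⊤ : Submodule R M) := (Submodule.Quotient.eq _).mp ht
    rw [← hy]
    refine (Submodule.Quotient.eq _).mpr ?_
    rw [auxSmulEq M hI h1.ne', show m - y = -(y - m) by abel]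
    rw [auxSmulEq M hI one_ne_zero] at hmem
    exact neg_mem hmem

noncomputable def auxPsi : AdicCompletion I M →ₗ[R] M ⧸ (I • ⊤ : Submodule R M) :=
  (Submodule.quotEquivOfEq _ _ (by rw [pow_one]) :
      (M ⧸ (I ^ 1 • ⊤ : Submodule R M)) ≃ₗ[R] M ⧸ (I • ⊤ : Submodule R M)).toLinearMap ∘ₗ
    AdicCompletion.eval I M 1

theorem auxPsi_of (m : M) :
    auxPsi M (AdicCompletion.of I M m) = Submodule.Quotient.mk m := by
  simp only [auxPsi, LinearMap.comp_apply, LinearEquiv.coe_coe, AdicCompletion.eval_of,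
    Submodule.mkQ_apply, Submodule.quotEquivOfEq_mk]

theorem auxPsi_bijective (hI : I ^ 2 = I) : Function.Bijective (auxPsi (I := I) M) := by
  constructor
  · refine (injective_iff_map_eq_zero _).mpr fun x hx => ?_
    obtain ⟨m, rfl⟩ := auxOfSurjective M hI x
    rw [auxPsi_of] at hx
    exact auxOfEqZero hI ((Submodule.Quotient.mk_eq_zero _).mp hx)
  · intro y
    obtain ⟨m, rfl⟩ := Submodule.Quotient.mk_surjective _ y
    exact ⟨AdicCompletion.of I M m, auxPsi_of M m⟩

noncomputable def auxEquiv (hI : I ^ 2 = I) :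
    AdicCompletion I M ≃ₗ[R] (R ⧸ I) ⊗[R] M :=
  (LinearEquiv.ofBijective (auxPsi M) (auxPsi_bijective M hI)) ≪≫ₗ
    (quotTensorEquivQuotSMul M I).symm

theorem auxEquiv_of (hI : I ^ 2 = I) (m : M) :
    auxEquiv M hI (AdicCompletion.of I M m) = 1 ⊗ₜ[R] m := by
  show (quotTensorEquivQuotSMul M I).symm
    ((LinearEquiv.ofBijective (auxPsi M) (auxPsi_bijective M hI)) (AdicCompletion.of I M m)) = _
  rw [LinearEquiv.ofBijective_apply, auxPsi_of, quotTensorEquivQuotSMul_symm_mk]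

theorem auxMapOf {N : Type u} [AddCommGroup N] [Module R N] (f : M →ₗ[R] N) (m : M) :
    AdicCompletion.map I f (AdicCompletion.of I M m) = AdicCompletion.of I N (f m) := by
  refine Subtype.ext (funext fun n => ?_)
  rw [AdicCompletion.map_val_apply]
  show (f.reduceModIdeal (I ^ n)) (Submodule.Quotient.mk m) = Submodule.Quotient.mk (f m)
  rw [LinearMap.reduceModIdeal_apply]

theorem auxNat (hI : I ^ 2 = I) {N : Type u} [AddCommGroup N] [Module R N]
    (f : M →ₗ[R] N) (x : AdicCompletion I M) :
    auxEquiv N hI (AdicCompletion.map I f x) =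
      LinearMap.lTensor (R ⧸ I) f (auxEquiv M hI x) := by
  obtain ⟨m, rfl⟩ := auxOfSurjective M hI x
  rw [auxMapOf, auxEquiv_of, auxEquiv_of, LinearMap.lTensor_tmul]

end Aux

/-- The `I`-adic completion functor `Λ_I` on the category of `R`-modules. -/
noncomputable def adicCompletionFunctor (R : Type u) [CommRing R] (I : Ideal R) :
    ModuleCat.{u} R ⥤ ModuleCat.{u} R where
  obj M := ModuleCat.of R (AdicCompletion I M)
  map {M N} f := ModuleCat.ofHom ((AdicCompletion.map I f.hom).restrictScalars R)
  map_id M := by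
    refine ModuleCat.hom_ext (LinearMap.ext fun x => ?_)
    show AdicCompletion.map I (LinearMap.id (M := M)) x = x
    rw [AdicCompletion.map_id]
    rfl
  map_comp {M N P} f g := by
    refine ModuleCat.hom_ext (LinearMap.ext fun x => ?_)
    show AdicCompletion.map I (g.hom ∘ₗ f.hom) x =
      AdicCompletion.map I g.hom (AdicCompletion.map I f.hom x)
    rw [AdicCompletion.map_comp_apply]

instance (R : Type u) [CommRing R] (I : Ideal R) : (adicCompletionFunctor R I).Additive where
  map_add {M N f g} := by
    refine ModuleCat.hom_ext (LinearMap.ext fun x => ?_)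
    refine Subtype.ext (funext fun n => ?_)
    obtain ⟨y, hy⟩ := Submodule.Quotient.mk_surjective _ (x.val n)
    show (f + g).hom.reduceModIdeal (I ^ n) (x.val n) =
      f.hom.reduceModIdeal (I ^ n) (x.val n) +
      g.hom.reduceModIdeal (I ^ n) (x.val n)
    rw [← hy]
    rfl

theorem stmt12 (R : Type u) [CommRing R] (I : Ideal R)
    (hcor : ∀ (N : Type u) [AddCommGroup N] [Module R N],
      I ^ 2 • (⊤ : Submodule R N) = I • (⊤ : Submodule R N)) :
    -- (1) `Λ_I(M) ≅ R/I ⊗_R M`, naturally in `M`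
    (∃ e : ∀ (M : Type u) [AddCommGroup M] [Module R M],
        AdicCompletion I M ≃ₗ[R] ((R ⧸ I) ⊗[R] M),
      ∀ (M N : Type u) [AddCommGroup M] [Module R M] [AddCommGroup N] [Module R N]
        (f : M →ₗ[R] N) (x : AdicCompletion I M),
          e N (AdicCompletion.map I f x) = LinearMap.lTensor (R ⧸ I) f (e M x)) ∧
    -- (2) `Λ_I` is right exact
    (∀ (A B C : Type u) [AddCommGroup A] [Module R A] [AddCommGroup B] [Module R B]
        [AddCommGroup C] [Module R C] (f : A →ₗ[R] B) (g : B →ₗ[R] C),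
        Function.Exact f g → Function.Surjective g →
          Function.Exact (AdicCompletion.map I f) (AdicCompletion.map I g) ∧
            Function.Surjective (AdicCompletion.map I g)) ∧
    -- (3) the `i`-th left derived functor of `Λ_I` is `Tor_i^R(R/I, −)`
    (∀ i : ℕ, Nonempty ((adicCompletionFunctor R I).leftDerived i ≅
        (Tor (ModuleCat.{u} R) i).obj (ModuleCat.of R (R ⧸ I)))) := by
  have hI : I ^ 2 = I := by
    have h2 := hcor R
    rwa [Ideal.smul_eq_mul, Ideal.smul_eq_mul, Ideal.mul_top, Ideal.mul_top] at h2
  refine ⟨⟨fun M _ _ => auxEquiv M hI, fun M N _ _ _ _ f x => auxNat M hI f x⟩, ?_, ?_⟩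
  · intro A B C _ _ _ _ _ _ f g hfg hg
    have hgs : Function.Surjective (AdicCompletion.map I g) := by
      intro y
      obtain ⟨c, rfl⟩ := auxOfSurjective C hI y
      obtain ⟨b, rfl⟩ := hg c
      exact ⟨AdicCompletion.of I B b, auxMapOf B g b⟩
    refine ⟨fun x => ?_, hgs⟩
    constructor
    · intro hx
      obtain ⟨b, rfl⟩ := auxOfSurjective B hI x
      rw [auxMapOf] at hx
      have h1 : g b ∈ (I • ⊤ : Submodule R C) := by
        have hc := congrArg (fun z : AdicCompletion I C => z.val 1) hx
        have hc' : (Submodule.Quotient.mk (g b) : C ⧸ (I ^ 1 • ⊤ : Submodule R C)) = 0 := hc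
        rw [← auxSmulEq C hI one_ne_zero]
        exact (Submodule.Quotient.mk_eq_zero _).mp hc'
      have h2 : g b ∈ Submodule.map g (I • ⊤ : Submodule R B) := by
        rw [Submodule.map_smul'', Submodule.map_top, LinearMap.range_eq_top.mpr hg]
        exact h1
      obtain ⟨b', hb', hgb⟩ := h2
      obtain ⟨a, ha⟩ := (hfg (b - b')).mp (by rw [map_sub, hgb, sub_self])
      refine ⟨AdicCompletion.of I A a, ?_⟩
      rw [auxMapOf, ha, map_sub, auxOfEqZero hI hb', sub_zero]
    · rintro ⟨y, rfl⟩
      obtain ⟨a, rfl⟩ := auxOfSurjective A hI y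
      rw [auxMapOf, auxMapOf, hfg.apply_apply_eq_zero a, map_zero]
  · intro i
    have natiso : adicCompletionFunctor R I ≅
        (MonoidalCategory.tensoringLeft (ModuleCat.{u} R)).obj (ModuleCat.of R (R ⧸ I)) :=
      NatIso.ofComponents (fun M => (auxEquiv M hI).toModuleIso) (by
        intro M N f
        refine ModuleCat.hom_ext (LinearMap.ext fun x => ?_)
        exact auxNat (M : Type u) hI f.hom x)
    exact ⟨(show (adicCompletionFunctor R I).leftDerived i ≅
        ((MonoidalCategory.tensoringLeft (ModuleCat.{u} R)).obj (ModuleCat.of R (R ⧸ I))).leftDerived i from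
           { hom := NatTrans.leftDerived natiso.hom i
             inv := NatTrans.leftDerived natiso.inv i
             hom_inv_id := by
               rw [← NatTrans.leftDerived_comp, Iso.hom_inv_id, NatTrans.leftDerived_id]
             inv_hom_id := by
               rw [← NatTrans.leftDerived_comp, Iso.inv_hom_id, NatTrans.leftDerived_id] })⟩
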